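/- Let V ∈ C²(ℝ²) with |d²V(x)| ≤ 0.01 for |x| ≤ 2, and suppose |V(0)| ≥ h and |dV(0)| ≥ 9|V(0)|^{1/2} with |dV(0)| ≤ 1. Then there exists x₀ with |x₀| ≤ (1/8)|V(0)|^{1/2} such that V(x₀) = 0, and moreover |dV(x₀)| ≥ 8|V(0)|^{1/2}. -/

import Mathlib

open MeasureTheory Real

set_option maxHeartbeats 1000000 in
/-- If `V ∈ C²(ℝ²)` with `|d²V| ≤ 0.01` on `|x| ≤ 2`, `|V(0)| ≥ h`,
`|dV(0)| ≥ 9|V(0)|^{1/2}`, and `|dV(0)| ≤ 1`, then there is `x₀` with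
`|x₀| ≤ (1/8)|V(0)|^{1/2}`, `V(x₀) = 0`, and `|dV(x₀)| ≥ 8|V(0)|^{1/2}`. -/
theorem stmt_8 (V : EuclideanSpace ℝ (Fin 2) → ℝ) (hV : ContDiff ℝ 2 V)
    (hHess : ∀ x : EuclideanSpace ℝ (Fin 2), ‖x‖ ≤ 2 → ‖fderiv ℝ (fderiv ℝ V) x‖ ≤ 0.01)
    (h : ℝ) (hh : 0 < h) (hh1 : h ≤ 1)
    (hV0 : h ≤ |V 0|)
    (hdV : 9 * Real.sqrt |V 0| ≤ ‖fderiv ℝ V 0‖)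
    (hdV1 : ‖fderiv ℝ V 0‖ ≤ 1) :
    ∃ x₀ : EuclideanSpace ℝ (Fin 2), ‖x₀‖ ≤ (1/8) * Real.sqrt |V 0| ∧ V x₀ = 0 ∧
      8 * Real.sqrt |V 0| ≤ ‖fderiv ℝ V x₀‖ := by
  have E_def : True := trivial
  set s : ℝ := Real.sqrt |V 0| with hs_def
  have ha : (0:ℝ) < |V 0| := lt_of_lt_of_le hh hV0
  have hs0 : 0 < s := Real.sqrt_pos.mpr ha
  have hs2 : s ^ 2 = |V 0| := Real.sq_sqrt ha.le
  set D : ℝ := ‖fderiv ℝ V 0‖ with hD_def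
  have hD0 : 0 < D := lt_of_lt_of_le (by positivity) hdV
  have hs9 : 9 * s ≤ 1 := le_trans hdV hdV1
  have hsle : s ≤ 1/9 := by linarith
  set T : ℝ := s / 8 with hT_def
  have hT0 : 0 < T := by positivity
  have hT2 : T ≤ 2 := by rw [hT_def]; linarith
  have hdiff : Differentiable ℝ V := hV.differentiable (by norm_num)
  have hC1 : ContDiff ℝ 1 (fderiv ℝ V) := hV.fderiv_right (le_refl _)
  -- Lipschitz bound for the gradient on the ball of radius 2
  have hLip : ∀ x : EuclideanSpace ℝ (Fin 2), ‖x‖ ≤ 2 → ‖fderiv ℝ V x - fderiv ℝ V 0‖ ≤ 0.01 * ‖x‖ := by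
    intro x hx
    have h0m : (0:EuclideanSpace ℝ (Fin 2)) ∈ Metric.closedBall (0:EuclideanSpace ℝ (Fin 2)) 2 :=
      Metric.mem_closedBall_self (by norm_num)
    have hxm : x ∈ Metric.closedBall (0:EuclideanSpace ℝ (Fin 2)) 2 :=
      mem_closedBall_zero_iff.mpr hx
    have := (convex_closedBall (0:EuclideanSpace ℝ (Fin 2)) 2).norm_image_sub_le_of_norm_fderiv_le
      (f := fderiv ℝ V) (C := 0.01)
      (fun y _ => (hC1.differentiable (by norm_num)).differentiableAt)
      (fun y hy => hHess y (mem_closedBall_zero_iff.mp hy))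
      h0m hxm
    simpa using this
  -- the unit vector realizing the norm of the gradient
  set v : EuclideanSpace ℝ (Fin 2) := (InnerProductSpace.toDual ℝ (EuclideanSpace ℝ (Fin 2))).symm (fderiv ℝ V 0) with hv_def
  have hvnorm : ‖v‖ = D := by
    rw [hv_def]; exact (InnerProductSpace.toDual ℝ (EuclideanSpace ℝ (Fin 2))).symm.norm_map _
  have hvne : v ≠ 0 := by
    intro hv0; rw [hv0, norm_zero] at hvnorm; exact hD0.ne' hvnorm.symm
  set e : EuclideanSpace ℝ (Fin 2) := ‖v‖⁻¹ • v with he_def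
  have henorm : ‖e‖ = 1 := by
    rw [he_def, norm_smul, norm_inv, norm_norm,
      inv_mul_cancel₀ (norm_ne_zero_iff.mpr hvne)]
  have hde : fderiv ℝ V 0 e = D := by
    have hinner : ∀ x : EuclideanSpace ℝ (Fin 2), inner ℝ v x = fderiv ℝ V 0 x := fun x => by
      rw [hv_def]; exact InnerProductSpace.toDual_symm_apply
    have := hinner e
    rw [he_def, real_inner_smul_right, real_inner_self_eq_norm_sq] at this
    rw [← this, hvnorm]
    field_simp
  set σ : ℝ := if 0 < V 0 then 1 else -1 with hσ_def
  have hσ1 : |σ| = 1 := by rw [hσ_def]; split <;> norm_num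
  have hσne : σ ≠ 0 := by rw [hσ_def]; split <;> norm_num
  have hσV : σ * V 0 = |V 0| := by
    rw [hσ_def]
    split
    · rw [abs_of_pos (by assumption)]; ring
    · rw [abs_of_nonpos (by linarith [not_lt.mp (by assumption : ¬ 0 < V 0)])]; ring
  set u : EuclideanSpace ℝ (Fin 2) := -σ • e with hu_def
  have hunorm : ‖u‖ = 1 := by rw [hu_def, norm_smul, henorm, norm_neg]; simp [hσ1]
  have hss : σ * σ = 1 := by rw [hσ_def]; split <;> norm_num
  have hdu : fderiv ℝ V 0 u = -σ * D := by
    rw [hu_def, ContinuousLinearMap.map_smul, hde, smul_eq_mul]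
  have hnormtu : ∀ t : ℝ, ‖t • u‖ = |t| := by
    intro t; rw [norm_smul, hunorm, mul_one, Real.norm_eq_abs]
  -- the function along the line
  set φ : ℝ → ℝ := fun t => σ * V (t • u) with hφ_def
  have hγ : ∀ t : ℝ, HasDerivAt (fun t : ℝ => t • u) u t := by
    intro t
    simpa using (hasDerivAt_id t).smul_const u
  have hφd : ∀ t : ℝ, HasDerivAt φ (σ * fderiv ℝ V (t • u) u) t := by
    intro t
    exact ((hdiff (t • u)).hasFDerivAt.comp_hasDerivAt t (hγ t)).const_mul σ
  -- bound on the derivative deviation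
  have hderiv_dev : ∀ t : ℝ, 0 ≤ t → t ≤ T →
      |σ * fderiv ℝ V (t • u) u + D| ≤ 0.01 * t := by
    intro t ht0 htT
    have htu2 : ‖t • u‖ ≤ 2 := by
      rw [hnormtu, abs_of_nonneg ht0]; linarith
    have hL := hLip (t • u) htu2
    have key : σ * fderiv ℝ V (t • u) u + D
        = σ * ((fderiv ℝ V (t • u) - fderiv ℝ V 0) u) := by
      rw [ContinuousLinearMap.sub_apply, hdu]
      linear_combination (-D) * hss
    rw [key, abs_mul, hσ1, one_mul]
    calc |(fderiv ℝ V (t • u) - fderiv ℝ V 0) u|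
        ≤ ‖fderiv ℝ V (t • u) - fderiv ℝ V 0‖ * ‖u‖ :=
          (fderiv ℝ V (t • u) - fderiv ℝ V 0).le_opNorm u
      _ ≤ 0.01 * ‖t • u‖ * 1 := by
          rw [hunorm]
          exact mul_le_mul_of_nonneg_right hL (by norm_num)
      _ = 0.01 * t := by rw [hnormtu, abs_of_nonneg ht0]; ring
  -- mean value bound for ψ t = φ t + t * D
  set ψ : ℝ → ℝ := fun t => φ t + t * D with hψ_def
  have hψd : ∀ t ∈ Set.Icc (0:ℝ) T,
      HasDerivWithinAt ψ (σ * fderiv ℝ V (t • u) u + D) (Set.Icc 0 T) t := by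
    intro t _
    exact ((hφd t).add (hasDerivAt_mul_const D)).hasDerivWithinAt
  have hψbound : ‖ψ T - ψ 0‖ ≤ (0.01 * T) * ‖T - 0‖ := by
    apply (convex_Icc (0:ℝ) T).norm_image_sub_le_of_norm_hasDerivWithin_le
      (f' := fun t => σ * fderiv ℝ V (t • u) u + D)
      hψd ?_ (Set.left_mem_Icc.mpr hT0.le) (Set.right_mem_Icc.mpr hT0.le)
    intro t ht
    rw [Real.norm_eq_abs]
    exact le_trans (hderiv_dev t ht.1 ht.2) (by nlinarith [ht.1, ht.2])
  have hφ0 : φ 0 = |V 0| := by rw [hφ_def]; simp [hσV]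
  have hφT : φ T < 0 := by
    have h1 : ψ T - ψ 0 ≤ 0.01 * T * T := by
      have h1' := hψbound
      rw [Real.norm_eq_abs, Real.norm_eq_abs, sub_zero, abs_of_nonneg hT0.le] at h1'
      exact le_trans (le_abs_self _) h1'
    have h3 : ψ 0 = |V 0| := by rw [hψ_def]; simp [hφ0]
    have h4 : ψ T = φ T + T * D := rfl
    have h5 : φ T ≤ |V 0| + 0.01 * T * T - T * D := by
      rw [h4, h3] at h1; linarith
    have h6 : T * (9 * s) ≤ T * D := mul_le_mul_of_nonneg_left hdV hT0.le
    have h8 : 0.01 * T * T = 0.01 * (s/8) * (s/8) := by rw [hT_def]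
    have h9 : T * D = (s/8) * D := by rw [hT_def]
    have h10 : T * (9*s) = (s/8) * (9*s) := by rw [hT_def]
    have h11 : (s/8) * (s/8) = s^2/64 := by ring
    have h12 : (s/8) * (9*s) = 9*s^2/8 := by ring
    have h13 : 0 < s^2 := by positivity
    linarith [h5, h6, h8, h9, h10, h11, h12, hs2, h13]
  -- intermediate value theorem
  have hcont : ContinuousOn φ (Set.Icc 0 T) :=
    fun t _ => ((hφd t).continuousAt).continuousWithinAt
  have hIVT : (0:ℝ) ∈ φ '' Set.Icc 0 T := by
    apply intermediate_value_Icc' hT0.le hcont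
    constructor
    · exact hφT.le
    · rw [hφ0]; exact ha.le
  obtain ⟨t₀, ht₀mem, ht₀⟩ := hIVT
  refine ⟨t₀ • u, ?_, ?_, ?_⟩
  · rw [hnormtu, abs_of_nonneg ht₀mem.1]
    calc t₀ ≤ T := ht₀mem.2
      _ = (1/8) * s := by rw [hT_def]; ring
  · have hz : σ * V (t₀ • u) = 0 := by simpa [hφ_def] using ht₀
    exact (mul_eq_zero.mp hz).resolve_left hσne
  · have htu2 : ‖t₀ • u‖ ≤ 2 := by
      rw [hnormtu, abs_of_nonneg ht₀mem.1]; linarith [ht₀mem.2]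
    have hL := hLip (t₀ • u) htu2
    have h1 : ‖t₀ • u‖ ≤ T := by
      rw [hnormtu, abs_of_nonneg ht₀mem.1]; exact ht₀mem.2
    have h2 : D - ‖fderiv ℝ V (t₀ • u)‖ ≤ 0.01 * T := by
      have := norm_sub_norm_le (fderiv ℝ V 0) (fderiv ℝ V (t₀ • u))
      have h1' : (0.01:ℝ) * ‖t₀ • u‖ ≤ 0.01 * T := by linarith
      have h3 : ‖fderiv ℝ V 0 - fderiv ℝ V (t₀ • u)‖ ≤ 0.01 * T := by
        rw [norm_sub_rev]
        exact le_trans hL h1'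
      linarith
    have : 9 * s - 0.01 * (s/8) ≤ ‖fderiv ℝ V (t₀ • u)‖ := by
      rw [hT_def] at h2; linarith
    linarith
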